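/- Assume α̃ < 1 (hence 0 < r < 1). Then the mean queue length satisfies E[L] = Σ_{k≥1} k·π_{k0} + Σ_{k≥1} k·π_{k1} = (K·p(0)/(1−r))·[θ̄ + θ(1 − rα̃)/(p̄(1)μ_b(1−r)(1−α̃)²)]. -/

import Mathlib

set_option maxHeartbeats 1000000


/-- Geo/Geo/1 with multiple working vacations, partially observable case.
Mean queue length:
E[L] = Σ_{k≥1} k π_{k0} + Σ_{k≥1} k π_{k1}
     = (K p(0)/(1-r)) [θ̄ + θ(1 - rα̃)/(p̄(1) μ_b (1-r)(1-α̃)²)]. -/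
theorem stmt_10
    (p μb μv θ q0 q1 p0 p1 al be r K : ℝ) (π0 π1 : ℕ → ℝ)
    (hp : p ∈ Set.Ioo (0:ℝ) 1) (hμb : μb ∈ Set.Ioo (0:ℝ) 1)
    (hμv : μv ∈ Set.Ioo (0:ℝ) 1) (hθ : θ ∈ Set.Ioo (0:ℝ) 1)
    (hq0 : q0 ∈ Set.Icc (0:ℝ) 1) (hq1 : q1 ∈ Set.Icc (0:ℝ) 1)
    (hp0 : p0 = p * q0) (hp1 : p1 = p * q1)
    (hp0m : p0 ∈ Set.Ioo (0:ℝ) 1) (hp1m : p1 ∈ Set.Ioo (0:ℝ) 1)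
    (hal : al = p1 * (1 - μb) / ((1 - p1) * μb))
    (hbe : be = θ / (1 - θ))
    (hr : r = (be + p0 * (1 - μv) + (1 - p0) * μv -
        Real.sqrt ((be + p0 * (1 - μv) + (1 - p0) * μv) ^ 2 -
          4 * p0 * (1 - p0) * μv * (1 - μv))) / (2 * (1 - p0) * μv))
    (hK : K = (1 - p1) * μb * (1 - r) * (1 - al) /
        ((1 - p1) * μb * (1 - r) * (1 - al) *
          (θ + (1 - θ) * (1 - p0) * μv * (1 - r) + p0 * (1 - θ)) + p0 * θ))
    (hπ00 : π0 0 = K * (θ + (1 - θ) * (1 - p0) * μv * (1 - r)))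
    (hπ0k : ∀ k : ℕ, 1 ≤ k → π0 k = K * p0 * (1 - θ) * (1 - r) * r ^ (k - 1))
    (hπ1k : ∀ k : ℕ, 1 ≤ k →
      π1 k = K * (p0 * θ / ((1 - p1) * μb)) * ∑ j ∈ Finset.range k, r ^ j * al ^ (k - 1 - j))
    (hal1 : al < 1) :
    Summable (fun k : ℕ => (k : ℝ) * π0 k) ∧
    Summable (fun k : ℕ => ((k : ℝ) + 1) * π1 (k + 1)) ∧
    (∑' k : ℕ, (k : ℝ) * π0 k) + (∑' k : ℕ, ((k : ℝ) + 1) * π1 (k + 1))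
      = K * p0 / (1 - r) *
          ((1 - θ) + θ * (1 - r * al) / ((1 - p1) * μb * (1 - r) * (1 - al) ^ 2)) := by
  obtain ⟨hp0a, hp0b⟩ := hp0m
  obtain ⟨hp1a, hp1b⟩ := hp1m
  obtain ⟨hθa, hθb⟩ := hθ
  obtain ⟨hμba, hμbb⟩ := hμb
  obtain ⟨hμva, hμvb⟩ := hμv
  -- abbreviations for the quadratic
  set A := (1 - p0) * μv with hA
  set B := be + p0 * (1 - μv) + (1 - p0) * μv with hB
  set C := p0 * (1 - μv) with hC
  set D := B ^ 2 - 4 * p0 * (1 - p0) * μv * (1 - μv) with hD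
  have hApos : 0 < A := mul_pos (by linarith) hμva
  have hCpos : 0 < C := mul_pos hp0a (by linarith)
  have hbepos : 0 < be := by
    rw [hbe]; exact div_pos hθa (by linarith)
  have hDAC : D = B ^ 2 - 4 * A * C := by rw [hD, hA, hC]; ring
  have hBpos : 0 < B := by
    rw [hB]; nlinarith
  have hDpos : 0 < D := by
    rw [hDAC]
    have hBAC : B = be + C + A := by rw [hB, hA, hC]
    nlinarith [sq_nonneg (A - C), mul_pos hApos hCpos]
  have hsqD : Real.sqrt D < B := by
    rw [Real.sqrt_lt' hBpos, hDAC]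
    nlinarith [mul_pos hApos hCpos]
  have hsqD2 : B - 2 * A < Real.sqrt D := by
    apply Real.lt_sqrt_of_sq_lt
    rw [hDAC]
    have hBAC : B = be + C + A := by rw [hB, hA, hC]
    nlinarith [mul_pos hApos hbepos]
  have hr0 : 0 < r := by
    rw [hr]
    apply div_pos (by linarith)
    rw [hA] at hApos; linarith
  have hr1 : r < 1 := by
    rw [hr, div_lt_one (by rw [hA] at hApos; linarith)]
    linarith
  have hal0 : 0 < al := by
    rw [hal]
    exact div_pos (mul_pos hp1a (by linarith)) (mul_pos (by linarith) hμba)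
  have h1r : (1 : ℝ) - r ≠ 0 := by linarith
  have h1al : (1 : ℝ) - al ≠ 0 := by linarith
  have hpm : (1 - p1) * μb ≠ 0 := ne_of_gt (mul_pos (by linarith) hμba)
  have hrn : ‖r‖ < 1 := by rw [Real.norm_eq_abs, abs_of_pos hr0]; exact hr1
  have haln : ‖al‖ < 1 := by rw [Real.norm_eq_abs, abs_of_pos hal0]; exact hal1
  -- basic series
  have hSr : HasSum (fun n : ℕ => r ^ n) ((1 - r)⁻¹) :=
    hasSum_geometric_of_lt_one hr0.le hr1
  have hSal : HasSum (fun n : ℕ => al ^ n) ((1 - al)⁻¹) :=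
    hasSum_geometric_of_lt_one hal0.le hal1
  have hSnr : HasSum (fun n : ℕ => (n : ℝ) * r ^ n) (r / (1 - r) ^ 2) :=
    hasSum_coe_mul_geometric_of_norm_lt_one hrn
  have hSnal : HasSum (fun n : ℕ => (n : ℝ) * al ^ n) (al / (1 - al) ^ 2) :=
    hasSum_coe_mul_geometric_of_norm_lt_one haln
  have hSf1 : HasSum (fun n : ℕ => ((n : ℝ) + 1) * r ^ n) (1 / (1 - r) ^ 2) := by
    have := hSnr.add hSr
    have hval : r / (1 - r) ^ 2 + (1 - r)⁻¹ = 1 / (1 - r) ^ 2 := by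
      field_simp; ring
    rw [hval] at this
    convert this using 2 with n; ring
  -- the first sum
  have hπ0succ : (fun k : ℕ => ((k : ℝ) + 1) * π0 (k + 1))
      = fun k : ℕ => (K * p0 * (1 - θ) * (1 - r)) * (((k : ℝ) + 1) * r ^ k) := by
    funext k
    rw [hπ0k (k + 1) (Nat.le_add_left 1 k)]
    simp only [Nat.add_sub_cancel]
    ring
  have hH0 : HasSum (fun k : ℕ => ((k : ℝ) + 1) * π0 (k + 1))
      (K * p0 * (1 - θ) * (1 - r) * (1 / (1 - r) ^ 2)) := by
    rw [hπ0succ]; exact hSf1.mul_left _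
  have hsum0 : Summable (fun k : ℕ => (k : ℝ) * π0 k) := by
    rw [← summable_nat_add_iff 1]
    convert hH0.summable using 2 with k
    · exact rfl
    push_cast; ring
  have htsum0 : (∑' k : ℕ, (k : ℝ) * π0 k)
      = K * p0 * (1 - θ) * (1 - r) * (1 / (1 - r) ^ 2) := by
    rw [Summable.tsum_eq_zero_add hsum0]
    simp only [Nat.cast_zero, zero_mul, zero_add]
    rw [← hH0.tsum_eq]
    congr 1; funext k; push_cast; ring
  -- the second sum, via two Cauchy products
  have hnf1 : Summable (fun n : ℕ => ‖((n : ℝ) + 1) * r ^ n‖) := by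
    simp_rw [Real.norm_eq_abs]
    exact hSf1.summable.abs
  have hng1 : Summable (fun n : ℕ => ‖al ^ n‖) := by
    simp_rw [Real.norm_eq_abs]; exact hSal.summable.abs
  have hnf2 : Summable (fun n : ℕ => ‖r ^ n‖) := by
    simp_rw [Real.norm_eq_abs]; exact hSr.summable.abs
  have hng2 : Summable (fun n : ℕ => ‖(n : ℝ) * al ^ n‖) := by
    simp_rw [Real.norm_eq_abs]; exact hSnal.summable.abs
  have hC1 : HasSum (fun k : ℕ => ∑ j ∈ Finset.range (k + 1),
        (((j : ℝ) + 1) * r ^ j) * al ^ (k - j))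
      ((1 / (1 - r) ^ 2) * (1 - al)⁻¹) := by
    have := hasSum_sum_range_mul_of_summable_norm hnf1 hng1
    rwa [hSf1.tsum_eq, hSal.tsum_eq] at this
  have hC2 : HasSum (fun k : ℕ => ∑ j ∈ Finset.range (k + 1),
        (r ^ j) * (((k - j : ℕ) : ℝ) * al ^ (k - j)))
      ((1 - r)⁻¹ * (al / (1 - al) ^ 2)) := by
    have := hasSum_sum_range_mul_of_summable_norm hnf2 hng2
    rwa [hSr.tsum_eq, hSnal.tsum_eq] at this
  have hkey : ∀ k : ℕ, ((k : ℝ) + 1) * π1 (k + 1)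
      = (K * (p0 * θ / ((1 - p1) * μb))) *
        ((∑ j ∈ Finset.range (k + 1), (((j : ℝ) + 1) * r ^ j) * al ^ (k - j)) +
         (∑ j ∈ Finset.range (k + 1), (r ^ j) * (((k - j : ℕ) : ℝ) * al ^ (k - j)))) := by
    intro k
    rw [hπ1k (k + 1) (Nat.le_add_left 1 k)]
    simp only [Nat.add_sub_cancel]
    rw [← Finset.sum_add_distrib]
    simp only [Finset.mul_sum]
    apply Finset.sum_congr rfl
    intro j hj
    have hjk : j ≤ k := Finset.mem_range_succ_iff.mp hj
    have hcast : ((k - j : ℕ) : ℝ) = (k : ℝ) - (j : ℝ) := by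
      push_cast [Nat.cast_sub hjk]; ring
    rw [hcast]
    ring
  have hH1 : HasSum (fun k : ℕ => ((k : ℝ) + 1) * π1 (k + 1))
      ((K * (p0 * θ / ((1 - p1) * μb))) *
        ((1 / (1 - r) ^ 2) * (1 - al)⁻¹ + (1 - r)⁻¹ * (al / (1 - al) ^ 2))) := by
    have := (hC1.add hC2).mul_left (K * (p0 * θ / ((1 - p1) * μb)))
    convert this using 1
    · exact rfl
    funext k; exact hkey k
  refine ⟨hsum0, hH1.summable, ?_⟩
  rw [htsum0, hH1.tsum_eq]
  field_simp
  ring
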